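/- Let R be a group of squarefree order isomorphic to C_n ⋊ C_m with trivial center, such that for every pair of primes p | m and q | n, every subgroup of R of order pq is nonabelian. Let H be a characteristic subgroup of prime index in R. If m is not prime, then the centralizer of H in Aut(R) is trivial. -/

import Mathlib

lemma stmt10_cyc_comm {G : Type*} [Group G] (h : IsCyclic G) (a b : G) : a * b = b * a := by
  obtain ⟨g, hg⟩ := h.exists_generator
  obtain ⟨i, hi⟩ := hg a
  obtain ⟨j, hj⟩ := hg b
  rw [← hi, ← hj, ← zpow_add, ← zpow_add, add_comm]

lemma stmt10_cauchy {R : Type*} [Group R] [Finite R] (K : Subgroup R) (r : ℕ)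
    (hr : r.Prime) (hdvd : r ∣ Nat.card K) : ∃ g : R, g ∈ K ∧ orderOf g = r := by
  have : Fact r.Prime := ⟨hr⟩
  have : Fintype K := Fintype.ofFinite K
  rw [Nat.card_eq_fintype_card] at hdvd
  obtain ⟨g, hg⟩ := exists_prime_orderOf_dvd_card r hdvd
  exact ⟨g, g.2, (Subgroup.orderOf_coe g).trans hg⟩



/-- Lemma on `C_n ⋊ C_m` of squarefree order with trivial center in which
every subgroup of order `pq` (`p ∣ m`, `q ∣ n` primes) is nonabelian: a characteristic
subgroup `H` of prime index has trivial centraliser in `Aut(R)` when `m` is not prime. -/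
theorem stmt10 {R : Type*} [Group R] [Finite R] (n m : ℕ)
    (hsf : Squarefree (Nat.card R)) (hcard : Nat.card R = n * m)
    (hZ : Subgroup.center R = ⊥)
    (N M : Subgroup R) (hNnorm : N.Normal) (hNcyc : IsCyclic N) (hNcard : Nat.card N = n)
    (hMcyc : IsCyclic M) (hMcard : Nat.card M = m)
    (hNM : N ⊓ M = ⊥) (hNMtop : N ⊔ M = ⊤)
    (hnonab : ∀ p q : ℕ, p.Prime → q.Prime → p ∣ m → q ∣ n →
      ∀ X : Subgroup R, Nat.card X = p * q → ¬ ∀ a b : X, a * b = b * a)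
    (H : Subgroup R) [H.Characteristic] (hHidx : (H.index).Prime)
    (hm : ¬ m.Prime) :
    ∀ φ : MulAut R, (∀ h ∈ H, φ h = h) → φ = 1 := by
  intro φ hφ
  have hpfact : Fact (H.index).Prime := ⟨hHidx⟩
  have hsf' : Squarefree (n * m) := hcard ▸ hsf
  have hcop : Nat.Coprime n m := (Nat.squarefree_mul_iff.mp hsf').1
  have hnm0 : n * m ≠ 0 := by rw [← hcard]; exact Nat.card_pos.ne'
  have hn0 : n ≠ 0 := fun h => hnm0 (by simp [h])
  have hm0 : m ≠ 0 := fun h => hnm0 (by simp [h])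
  -- squarefree consequence
  have hsq : ∀ d : ℕ, d.Prime → d * d ∣ Nat.card R → False := by
    intro d hd hdd
    exact hd.one_lt.ne' (Nat.isUnit_iff.mp (hsf d hdd))
  -- key abelian pq contradiction
  have keyA : ∀ a b : R, Commute a b → ∀ q p' : ℕ, q.Prime → p'.Prime → q ∣ n → p' ∣ m →
      orderOf a = q → orderOf b = p' → False := by
    intro a b hab q p' hq hp' hqn hp'm ha hb
    have hco : Nat.Coprime (orderOf a) (orderOf b) := by
      rw [ha, hb]
      exact Nat.Coprime.coprime_dvd_left hqn (Nat.Coprime.coprime_dvd_right hp'm hcop)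
    have horder : orderOf (a * b) = q * p' := by
      rw [hab.orderOf_mul_eq_mul_orderOf_of_coprime hco, ha, hb]
    refine hnonab p' q hp' hq hp'm hqn (Subgroup.zpowers (a * b)) ?_ ?_
    · rw [Nat.card_zpowers, horder, mul_comm]
    · intro u v
      exact Subtype.ext (Subgroup.mul_comm_of_mem_isMulCommutative _ u.2 v.2)
  -- nontriviality
  have hcomm_contra : (∀ a b : R, a * b = b * a) → False := by
    intro hcomm
    have h1 : ∀ r : R, r = 1 := by
      intro r
      have : r ∈ Subgroup.center R := Subgroup.mem_center_iff.mpr fun g => hcomm g r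
      rwa [hZ, Subgroup.mem_bot] at this
    have : Nat.card R = 1 :=
      Nat.card_eq_one_iff_unique.mpr ⟨⟨fun a b => (h1 a).trans (h1 b).symm⟩, ⟨1⟩⟩
    have : H.index = 1 := Nat.eq_one_of_dvd_one (this ▸ Subgroup.index_dvd_card (H := H))
    exact hHidx.one_lt.ne' this
  have hm1 : m ≠ 1 := by
    intro h
    have hM : M = ⊥ := Subgroup.card_eq_one.mp (by rw [hMcard, h])
    have hN : N = ⊤ := by rwa [hM, sup_bot_eq] at hNMtop
    have : IsCyclic R := by
      rw [hN] at hNcyc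
      exact isCyclic_of_surjective Subgroup.topEquiv.toMonoidHom Subgroup.topEquiv.surjective
    exact hcomm_contra (stmt10_cyc_comm this)
  have hn1 : n ≠ 1 := by
    intro h
    have hM : M = ⊤ := Subgroup.eq_top_of_card_eq _ (by rw [hMcard, hcard, h, one_mul])
    have : IsCyclic R := by
      rw [hM] at hMcyc
      exact isCyclic_of_surjective Subgroup.topEquiv.toMonoidHom Subgroup.topEquiv.surjective
    exact hcomm_contra (stmt10_cyc_comm this)
  -- quotient facts
  have hQcard : Nat.card (R ⧸ H) = H.index := (Subgroup.index_eq_card H).symm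
  have hQcomm : ∀ a b : R ⧸ H, a * b = b * a :=
    stmt10_cyc_comm (isCyclic_of_prime_card (p := H.index) hQcard)
  have hcommutator : ∀ a b : R, a * b * a⁻¹ * b⁻¹ ∈ H := by
    intro a b
    rw [← QuotientGroup.eq_one_iff]
    have : ((a * b * a⁻¹ * b⁻¹ : R) : R ⧸ H)
        = (a : R ⧸ H) * b * (a : R ⧸ H)⁻¹ * (b : R ⧸ H)⁻¹ := rfl
    rw [this, hQcomm (a : R ⧸ H) b]
    group
  have hmemH : ∀ y : R, ¬ (H.index ∣ orderOf y) → y ∈ H := by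
    intro y hy
    have h1 : orderOf (y : R ⧸ H) ∣ orderOf y := orderOf_map_dvd (QuotientGroup.mk' H) y
    have h2 : orderOf (y : R ⧸ H) ∣ H.index := hQcard ▸ orderOf_dvd_natCard _
    rcases (hHidx.eq_one_or_self_of_dvd _ h2) with h | h
    · have : (y : R ⧸ H) = 1 := orderOf_eq_one_iff.mp h
      rwa [QuotientGroup.eq_one_iff] at this
    · exact absurd (h ▸ h1) hy
  have hNcomm : ∀ a b : R, a ∈ N → b ∈ N → a * b = b * a := by
    intro a b ha hb
    exact Subtype.ext_iff.mp (stmt10_cyc_comm hNcyc ⟨a, ha⟩ ⟨b, hb⟩)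
  have hMcomm : ∀ a b : R, a ∈ M → b ∈ M → a * b = b * a := by
    intro a b ha hb
    exact Subtype.ext_iff.mp (stmt10_cyc_comm hMcyc ⟨a, ha⟩ ⟨b, hb⟩)
  -- Step IV : the prime index does not divide n
  have hpn : ¬ H.index ∣ n := by
    intro hpn
    obtain ⟨y, hyN, hyord⟩ := stmt10_cauchy N H.index hHidx (hNcard ▸ hpn)
    have hp' : (m.minFac).Prime := Nat.minFac_prime hm1
    obtain ⟨x, hxM, hxord⟩ := stmt10_cauchy M m.minFac hp' (hMcard ▸ m.minFac_dvd)
    by_cases hxy : Commute x y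
    · exact keyA y x hxy.symm H.index m.minFac hHidx hp' hpn m.minFac_dvd hyord hxord
    · set z := x * y * x⁻¹ * y⁻¹ with hz
      have hz1 : z ≠ 1 := by
        intro h
        exact hxy (commutatorElement_eq_one_iff_commute.mp h)
      have hxyx : x * y * x⁻¹ ∈ N := hNnorm.conj_mem y hyN x
      have hzN : z ∈ N := mul_mem hxyx (inv_mem hyN)
      have hzH : z ∈ H := hcommutator x y
      have hzp : z ^ H.index = 1 := by
        have hcomm : Commute (x * y * x⁻¹) y⁻¹ :=
          hNcomm _ _ hxyx (inv_mem hyN)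
        rw [hz, hcomm.mul_pow, conj_pow, ← hyord, pow_orderOf_eq_one, inv_pow,
          pow_orderOf_eq_one]
        simp
      have hzo : orderOf z = H.index := orderOf_eq_prime hzp hz1
      have : H.index * H.index ∣ Nat.card R := by
        rw [← Subgroup.card_mul_index (H := H)]
        exact mul_dvd_mul (hzo ▸ Subgroup.orderOf_dvd_natCard H hzH) dvd_rfl
      exact hsq _ hHidx this
  -- Step V : N ≤ H
  have hNH : N ≤ H := by
    intro y hy
    refine hmemH y fun hdvd => hpn (hdvd.trans ?_)
    exact hNcard ▸ Subgroup.orderOf_dvd_natCard N hy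
  -- Step VI : the prime index divides m
  have hpm : H.index ∣ m := by
    have h1 : H.index ∣ n * m := hcard ▸ Subgroup.index_dvd_card (H := H)
    rcases (Nat.Prime.dvd_mul hHidx).mp h1 with h | h
    · exact absurd h hpn
    · exact h
  -- p' : a second prime dividing m
  obtain ⟨k, hk⟩ := id hpm
  have hk1 : k ≠ 1 := by
    intro h
    rw [h, mul_one] at hk
    exact hm (hk ▸ hHidx)
  have hp'k : (k.minFac).Prime := Nat.minFac_prime hk1
  have hp'm : k.minFac ∣ m := (k.minFac_dvd).trans (Dvd.intro_left _ hk.symm)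
  have hp'p : k.minFac ≠ H.index := by
    intro h
    apply hsq H.index hHidx
    rw [hcard]
    refine Dvd.dvd.mul_left ?_ n
    rw [hk]
    exact mul_dvd_mul dvd_rfl (h ▸ k.minFac_dvd)
  -- m₁ : element of M ∩ H of order k.minFac
  obtain ⟨m₁, hm₁M, hm₁ord⟩ := stmt10_cauchy M k.minFac hp'k (hMcard ▸ hp'm)
  have hm₁H : m₁ ∈ H := by
    refine hmemH m₁ fun hdvd => ?_
    rw [hm₁ord] at hdvd
    exact hp'p ((Nat.prime_dvd_prime_iff_eq hHidx hp'k).mp hdvd).symm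
  -- x : element of M of order H.index, not in H
  obtain ⟨x, hxM, hxord⟩ := stmt10_cauchy M H.index hHidx (hMcard ▸ hpm)
  have hxH : x ∉ H := by
    intro hxH
    apply hsq H.index hHidx
    rw [← Subgroup.card_mul_index (H := H)]
    exact mul_dvd_mul (hxord ▸ Subgroup.orderOf_dvd_natCard H hxH) dvd_rfl
  -- H together with x generates R
  have hHtop : H ⊔ Subgroup.zpowers x = ⊤ := by
    set K := H ⊔ Subgroup.zpowers x with hK
    have hHK : H ≤ K := le_sup_left
    have hxK : x ∈ K := Subgroup.mem_sup_right (Subgroup.mem_zpowers x)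
    obtain ⟨d, hd⟩ := Subgroup.card_dvd_of_le hHK
    have hdvd : Nat.card H * d ∣ Nat.card H * H.index := by
      rw [← hd, Subgroup.card_mul_index]
      exact Subgroup.card_subgroup_dvd_card K
    have hdp : d ∣ H.index :=
      (mul_dvd_mul_iff_left (a := Nat.card H) Nat.card_pos.ne').mp hdvd
    rcases hHidx.eq_one_or_self_of_dvd d hdp with h | h
    · exfalso
      apply hxH
      have : H = K := Subgroup.eq_of_le_of_card_ge hHK (by rw [hd, h, mul_one])
      exact this ▸ hxK
    · apply Subgroup.eq_top_of_card_eq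
      rw [hd, h, Subgroup.card_mul_index]
  -- the defect c of φ at x
  set c := x⁻¹ * φ x with hc
  have hφx : φ x = x * c := by rw [hc]; group
  -- c centralizes N
  have hcN : ∀ w : R, w ∈ N → c * w = w * c := by
    intro w hw
    have h1 : φ (x * w * x⁻¹) = x * w * x⁻¹ := hφ _ (hNH (hNnorm.conj_mem w hw x))
    have h2 : φ (x * w * x⁻¹) = φ x * w * (φ x)⁻¹ := by
      rw [map_mul, map_mul, map_inv, hφ w (hNH hw)]
    have heq : φ x * w * (φ x)⁻¹ = x * w * x⁻¹ := h2 ▸ h1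
    have key : φ x * w = x * w * x⁻¹ * φ x := by rw [← heq]; group
    rw [hc, mul_assoc, key]
    group
  -- c commutes with m₁
  have hcm₁ : Commute c m₁ := by
    have h1 : Commute x m₁ := hMcomm x m₁ hxM hm₁M
    have h2 : Commute (φ x) m₁ := by
      have := hφ m₁ hm₁H
      have h3 : φ (x * m₁) = φ x * m₁ := by rw [map_mul, this]
      have h4 : φ (m₁ * x) = m₁ * φ x := by rw [map_mul, this]
      rw [show x * m₁ = m₁ * x from h1, h4] at h3
      exact h3.symm
    exact (h1.inv_left).mul_left h2
  -- c = 1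
  have hc1 : c = 1 := by
    by_contra hc1
    have hoc0 : orderOf c ≠ 0 := (orderOf_pos c).ne'
    have hoc1 : orderOf c ≠ 1 := fun h => hc1 (orderOf_eq_one_iff.mp h)
    set q := (orderOf c).minFac with hq
    have hqprime : q.Prime := Nat.minFac_prime hoc1
    have hqdvd : q ∣ orderOf c := Nat.minFac_dvd _
    set y := c ^ (orderOf c / q) with hy
    have hyord : orderOf y = q := orderOf_pow_orderOf_div hoc0 hqdvd
    have hqnm : q ∣ n * m := hqdvd.trans (hcard ▸ orderOf_dvd_natCard c)
    rcases (Nat.Prime.dvd_mul hqprime).mp hqnm with hqn | hqm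
    · -- y commutes with m₁, orders q | n and k.minFac | m
      have hcomm : Commute y m₁ := hcm₁.pow_left _
      exact keyA y m₁ hcomm q k.minFac hqprime hp'k hqn hp'm hyord hm₁ord
    · -- y centralizes N; take y₂ in N of prime order
      have hq₂ : (n.minFac).Prime := Nat.minFac_prime hn1
      obtain ⟨y₂, hy₂N, hy₂ord⟩ := stmt10_cauchy N n.minFac hq₂ (hNcard ▸ n.minFac_dvd)
      have hcomm : Commute y₂ y := by
        have : Commute c y₂ := hcN y₂ hy₂N
        exact (this.pow_left _).symm
      exact keyA y₂ y hcomm n.minFac q hq₂ hqprime n.minFac_dvd hqm hy₂ord hyord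
  have hφxx : φ x = x := by rw [hφx, hc1, mul_one]
  -- conclude φ = 1
  have hfix : ∀ r : R, φ r = r := by
    let S : Subgroup R :=
      { carrier := {r : R | φ r = r}
        mul_mem' := fun {a b} ha hb => by
          simp only [Set.mem_setOf_eq] at *
          rw [map_mul, ha, hb]
        one_mem' := map_one φ
        inv_mem' := fun {a} ha => by
          simp only [Set.mem_setOf_eq] at *
          rw [map_inv, ha] }
    have hS : H ⊔ Subgroup.zpowers x ≤ S :=
      sup_le (fun h hh => hφ h hh) (Subgroup.zpowers_le.mpr hφxx)
    intro r
    exact hS (hHtop ▸ Subgroup.mem_top r)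
  exact MulEquiv.ext hfix
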